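/- For every set W of vertices of G₂ with |W| < ∏_{i=1}^{m−1} (p_i − 1), the graph G₂ − W obtained by deleting the vertices of W is connected. -/

import Mathlib

open Finset

abbrev NN (m : ℕ) (p : Fin m → ℕ) : ℕ := ∏ i, p i

abbrev Vtx (m : ℕ) (p : Fin m → ℕ) : Type :=
  {x : ZMod (NN m p) // x ≠ 0 ∧ ¬ IsUnit x}

/-- The induced subgraph `G₂` of the comaximal graph of `ℤ/nℤ` on nonzero nonunits. -/
def G2 (m : ℕ) (p : Fin m → ℕ) : SimpleGraph (Vtx m p) where
  Adj x y := x ≠ y ∧ Ideal.span ({x.1, y.1} : Set (ZMod (NN m p))) = ⊤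
  symm := by
    constructor
    rintro x y ⟨hxy, h⟩
    exact ⟨hxy.symm, by rwa [Set.pair_comm]⟩
  loopless := by constructor; rintro x ⟨h, -⟩; exact h rfl

/-- The zero-set of `x`: indices `i` where the image of `x` in `ℤ/p_iℤ` is zero. -/
def Z (m : ℕ) (p : Fin m → ℕ) (x : ZMod (NN m p)) : Finset (Fin m) :=
  Finset.univ.filter fun i =>
    (ZMod.castHom (Finset.dvd_prod_of_mem p (Finset.mem_univ i)) (ZMod (p i))) x = 0

/-- The class `X_S` of vertices of `G₂` with zero-set `S`. -/
def XS (m : ℕ) (p : Fin m → ℕ) (S : Finset (Fin m)) : Set (Vtx m p) :=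
  {x | Z m p x.1 = S}

theorem stmt12 (m : ℕ) (hm : 2 ≤ m) (p : Fin m → ℕ) (hp : ∀ i, (p i).Prime)
    (hmono : StrictMono p) (W : Set (Vtx m p))
    (hW : W.ncard < ∏ i ∈ Finset.univ.erase (⟨m - 1, by omega⟩ : Fin m), (p i - 1)) :
    ((G2 m p).induce Wᶜ).Connected := by
  classical
  haveI hfact : ∀ i, Fact (p i).Prime := fun i => ⟨hp i⟩
  haveI : ∀ i, NeZero (p i) := fun i => ⟨(hp i).pos.ne'⟩
  haveI : NeZero (NN m p) := ⟨(Finset.prod_pos fun i _ => (hp i).pos).ne'⟩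
  haveI : Nontrivial (Fin m) :=
    ⟨⟨⟨0, by omega⟩, ⟨1, by omega⟩, by simp [Fin.ext_iff]⟩⟩
  have hcop : Pairwise (Function.onFun Nat.Coprime p) := fun i j hij =>
    (Nat.coprime_primes (hp i) (hp j)).mpr fun h => hij (hmono.injective h)
  set e := ZMod.prodEquivPi p hcop with he
  -- coordinates
  have hcoord : ∀ (x : ZMod (NN m p)) (i : Fin m),
      (ZMod.castHom (Finset.dvd_prod_of_mem p (Finset.mem_univ i)) (ZMod (p i))) x
        = e x i := by
    intro x i
    exact RingHom.congr_fun (RingHom.ext_zmod _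
      ((Pi.evalRingHom (fun i => ZMod (p i)) i).comp
        (e : ZMod (NN m p) →+* Π i, ZMod (p i)))) x
  have hzero : ∀ x : ZMod (NN m p), x = 0 ↔ ∀ i, e x i = 0 := by
    intro x
    rw [← map_eq_zero_iff e e.injective, funext_iff]
    simp
  have hunit : ∀ x : ZMod (NN m p), IsUnit x ↔ ∀ i, e x i ≠ 0 := by
    intro x
    constructor
    · intro h i
      exact isUnit_iff_ne_zero.mp ((h.map e).map (Pi.evalRingHom (fun i => ZMod (p i)) i))
    · intro h
      have hu : IsUnit (e x) :=
        isUnit_iff_exists_inv.mpr ⟨fun i => (e x i)⁻¹, funext fun i => mul_inv_cancel₀ (h i)⟩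
      have := hu.map e.symm
      simpa using this
  have hspan : ∀ x y : ZMod (NN m p),
      Ideal.span ({x, y} : Set (ZMod (NN m p))) = ⊤ ↔ ∀ i, e x i ≠ 0 ∨ e y i ≠ 0 := by
    intro x y
    rw [Ideal.eq_top_iff_one, Ideal.mem_span_pair]
    constructor
    · rintro ⟨a, b, hab⟩ i
      by_contra hc
      push_neg at hc
      have h := congrFun (congrArg (⇑e) hab) i
      simp [map_add, map_mul, hc.1, hc.2] at h
    · intro h
      refine ⟨e.symm (fun i => if e x i = 0 then 0 else (e x i)⁻¹),
              e.symm (fun i => if e x i = 0 then (e y i)⁻¹ else 0), ?_⟩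
      apply e.injective
      rw [map_add, map_mul, map_mul, map_one]
      funext i
      simp only [RingEquiv.apply_symm_apply, Pi.add_apply, Pi.mul_apply, Pi.one_apply]
      by_cases hf : e x i = 0
      · have hg : e y i ≠ 0 := (h i).resolve_left (not_not_intro hf)
        simp [hf, inv_mul_cancel₀ hg]
      · simp [hf, inv_mul_cancel₀ hf]
  have hadj : ∀ u v : Vtx m p, (∀ i, e u.1 i ≠ 0 ∨ e v.1 i ≠ 0) → (G2 m p).Adj u v := by
    intro u v h
    refine ⟨?_, (hspan _ _).mpr h⟩
    rintro rfl
    exact u.2.2 ((hunit _).mpr fun i => (h i).elim id id)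
  -- singleton classes survive
  have key : ∀ j : Fin m, ∃ v : Vtx m p, v ∉ W ∧ ∀ i, e v.1 i = 0 ↔ i = j := by
    intro j
    set A : Set (Vtx m p) := {v | ∀ i, e v.1 i = 0 ↔ i = j} with hA
    set t : ∀ i : Fin m, Finset (ZMod (p i)) :=
      fun i => if i = j then {0} else Finset.univ.erase 0 with ht
    have hmem : ∀ (f : Π i, ZMod (p i)) i, f i ∈ t i ↔ (f i = 0 ↔ i = j) := by
      intro f i
      by_cases hij : i = j
      · subst hij; simp [ht]
      · simp [ht, hij]
    have hinj : Function.Injective (fun v : Vtx m p => e v.1) :=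
      fun a b hab => Subtype.ext (e.injective hab)
    have himg : (fun v : Vtx m p => e v.1) '' A = ↑(Fintype.piFinset t) := by
      ext f
      constructor
      · rintro ⟨v, hv, rfl⟩
        simp only [Finset.mem_coe, Fintype.mem_piFinset]
        intro i
        exact (hmem _ i).mpr (hv i)
      · intro hf
        simp only [Finset.mem_coe, Fintype.mem_piFinset] at hf
        have hf' : ∀ i, f i = 0 ↔ i = j := fun i => (hmem f i).mp (hf i)
        obtain ⟨l, hl⟩ := exists_ne j
        have hxne : e.symm f ≠ 0 := by
          intro h0
          have hfl : f l = 0 := by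
            have h1 : f = e (e.symm f) := (e.apply_symm_apply f).symm
            rw [h1, h0, map_zero]; rfl
          exact hl ((hf' l).mp hfl)
        have hxnu : ¬ IsUnit (e.symm f) := by
          intro hu
          have := (hunit _).mp hu j
          apply this
          rw [e.apply_symm_apply]
          exact (hf' j).mpr rfl
        refine ⟨⟨e.symm f, hxne, hxnu⟩, ?_, ?_⟩
        · intro i
          simpa [e.apply_symm_apply] using hf' i
        · exact e.apply_symm_apply f
    have hAcard : A.ncard = ∏ i ∈ Finset.univ.erase j, (p i - 1) := by
      rw [← Set.ncard_image_of_injective A hinj, himg, Set.ncard_coe_finset,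
        Fintype.card_piFinset, ← Finset.mul_prod_erase Finset.univ _ (Finset.mem_univ j)]
      have h1 : (t j).card = 1 := by simp [ht]
      rw [h1, one_mul]
      refine Finset.prod_congr rfl fun i hi => ?_
      have hij : i ≠ j := Finset.ne_of_mem_erase hi
      simp [ht, hij, Finset.card_erase_of_mem, ZMod.card]
    have hbound : (∏ i ∈ Finset.univ.erase (⟨m - 1, by omega⟩ : Fin m), (p i - 1))
        ≤ A.ncard := by
      rw [hAcard]
      set jm : Fin m := ⟨m - 1, by omega⟩ with hjm
      have h1 : (∏ i ∈ Finset.univ.erase j, (p i - 1)) * (p j - 1)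
          = (∏ i ∈ Finset.univ.erase jm, (p i - 1)) * (p jm - 1) := by
        rw [Finset.prod_erase_mul _ _ (Finset.mem_univ j),
          Finset.prod_erase_mul _ _ (Finset.mem_univ jm)]
      have hjle : j ≤ jm := by
        rw [Fin.le_def]
        have := j.2
        simp only [hjm]
        omega
      have hle : p j - 1 ≤ p jm - 1 := Nat.sub_le_sub_right (hmono.monotone hjle) 1
      have hpos : 0 < p jm - 1 := by have := (hp jm).two_le; omega
      refine Nat.le_of_mul_le_mul_right ?_ hpos
      calc (∏ i ∈ Finset.univ.erase jm, (p i - 1)) * (p jm - 1)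
          = (∏ i ∈ Finset.univ.erase j, (p i - 1)) * (p j - 1) := h1.symm
        _ ≤ (∏ i ∈ Finset.univ.erase j, (p i - 1)) * (p jm - 1) :=
            Nat.mul_le_mul_left _ hle
    have hns : ¬ A ⊆ W := fun hsub =>
      absurd (hW.trans_le hbound) (not_lt.mpr (Set.ncard_le_ncard hsub W.toFinite))
    obtain ⟨v, hvA, hvW⟩ := Set.not_subset.mp hns
    exact ⟨v, hvW, hvA⟩
  -- adjacency with a singleton-class vertex
  have hadj2 : ∀ (u : Vtx m p) (j : Fin m) (v : Vtx m p),
      e u.1 j ≠ 0 → (∀ i, e v.1 i = 0 ↔ i = j) → (G2 m p).Adj u v := by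
    intro u j v hu hv
    apply hadj
    intro i
    by_cases hij : i = j
    · subst hij; exact Or.inl hu
    · exact Or.inr fun h0 => hij ((hv i).mp h0)
  obtain ⟨v0, hv0W, -⟩ := key ⟨0, by omega⟩
  haveI : Nonempty ↥(Wᶜ) := ⟨⟨v0, hv0W⟩⟩
  constructor
  intro a b
  obtain ⟨ja, hja⟩ : ∃ i, e (a.1 : Vtx m p).1 i ≠ 0 := by
    by_contra hc
    push_neg at hc
    exact (a.1 : Vtx m p).2.1 ((hzero _).mpr hc)
  obtain ⟨jb, hjb⟩ : ∃ i, e (b.1 : Vtx m p).1 i ≠ 0 := by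
    by_contra hc
    push_neg at hc
    exact (b.1 : Vtx m p).2.1 ((hzero _).mpr hc)
  obtain ⟨va, hvaW, hva⟩ := key ja
  obtain ⟨vb, hvbW, hvb⟩ := key jb
  have h1 : ((G2 m p).induce Wᶜ).Adj a ⟨va, hvaW⟩ := hadj2 a.1 ja va hja hva
  have h2 : ((G2 m p).induce Wᶜ).Adj ⟨vb, hvbW⟩ b := (hadj2 b.1 jb vb hjb hvb).symm
  have hmid : ((G2 m p).induce Wᶜ).Reachable ⟨va, hvaW⟩ ⟨vb, hvbW⟩ := by
    by_cases hjj : ja = jb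
    · subst hjj
      by_cases hvv : va = vb
      · subst hvv
        exact SimpleGraph.Reachable.refl _
      · obtain ⟨l, hl⟩ := exists_ne ja
        obtain ⟨vc, hvcW, hvc⟩ := key l
        have hac : ((G2 m p).induce Wᶜ).Adj ⟨va, hvaW⟩ ⟨vc, hvcW⟩ :=
          hadj2 va l vc (fun h => hl ((hva l).mp h)) hvc
        have hcb : ((G2 m p).induce Wᶜ).Adj ⟨vc, hvcW⟩ ⟨vb, hvbW⟩ :=
          (hadj2 vb l vc (fun h => hl ((hvb l).mp h)) hvc).symm
        exact hac.reachable.trans hcb.reachable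
    · have hne : e va.1 jb ≠ 0 := fun h => hjj ((hva jb).mp h).symm
      exact (show ((G2 m p).induce Wᶜ).Adj ⟨va, hvaW⟩ ⟨vb, hvbW⟩ from
        hadj2 va jb vb hne hvb).reachable
  exact (h1.reachable.trans hmid).trans h2.reachable
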